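/- Let φ = c_1 ∧ … ∧ c_m be a satisfiable propositional 3-CNF formula over variables x_1, …, x_n whose literals are variables or their negations, let k ∈ {1, …, n}, and let ν_max be the lexicographically maximum truth assignment satisfying φ with respect to the ordering (x_1, …, x_n). Define the WKB K_ω = (T, A)_ω where A = {p_ℓ(c_j, x_i) | x_i is the ℓ-th literal of c_j} ∪ {n_ℓ(c_j, x_i) | ¬x_i is the ℓ-th literal of c_j} ∪ {T(x_i) | 1 ≤ i ≤ n}, and T consists of: ∃n_ℓ^- ⊑ ¬T for 1 ≤ ℓ ≤ 3; ∃p_ℓ ⊑ ¬∃n_{ℓ'} and ∃p_ℓ^- ⊑ ¬∃n_{ℓ'}^- for 1 ≤ ℓ, ℓ' ≤ 3; and ∃p_ℓ ⊑ ¬∃p_{ℓ'} and ∃n_ℓ ⊑ ¬∃n_{ℓ'} for 1 ≤ ℓ ≠ ℓ' ≤ 3. Let ω(τ) = ∞ for every τ ∈ T, and with u = 3m + 1 let ω(α) = u^n for every role assertion α and ω(T(x_i)) = u^{n-i} for every 1 ≤ i ≤ n. Then K_ω ⊨_c^opt T(x_k) iff K_ω ⊨_p^opt T(x_k) iff ν_max(x_k)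 = 1. -/

import Mathlib

namespace DL

/-! ### Syntax -/

abbrev IndName := ℕ
abbrev CName := ℕ
abbrev RName := ℕ

/-- Roles: role names and inverse roles. -/
inductive Role where
  | name : RName → Role
  | inv  : RName → Role
deriving DecidableEq

/-- `ALCHIO` concepts. -/
inductive Concept where
  | top  : Concept
  | bot  : Concept
  | atom : CName → Concept
  | nom  : IndName → Concept
  | neg  : Concept → Concept
  | conj : Concept → Concept → Concept
  | ex   : Role → Concept → Concept
deriving DecidableEq

/-- TBox axioms: concept inclusions and role inclusions. -/
inductive Axiom where
  | ci : Concept → Concept → Axiom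
  | ri : Role → Role → Axiom
deriving DecidableEq

/-- ABox assertions. -/
inductive Assertion where
  | ca : CName → IndName → Assertion
  | ra : RName → IndName → IndName → Assertion
deriving DecidableEq

/-! ### Interpretations -/

/-- A DL interpretation with domain a subset of a universe `U`.  Individual names are
interpreted via `indI` (under the standard names assumption, the individual names of the
ABox under consideration are interpreted "as themselves", i.e. injectively). -/
structure Interp (U : Type) where
  dom : Set U
  indI : IndName → U
  cI : CName → Set U
  rI : RName → Set (U × U)
  cI_sub : ∀ A, cI A ⊆ dom
  rI_sub : ∀ r p, p ∈ rI r → p.1 ∈ dom ∧ p.2 ∈ dom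

variable {U : Type}

/-- Every individual name denotes an element of the domain. -/
def Interp.Proper (I : Interp U) : Prop := ∀ a, I.indI a ∈ I.dom

def Role.interp (I : Interp U) : Role → Set (U × U)
  | Role.name r => I.rI r
  | Role.inv r  => {p | (p.2, p.1) ∈ I.rI r}

def Concept.interp (I : Interp U) : Concept → Set U
  | Concept.top => I.dom
  | Concept.bot => ∅
  | Concept.atom A => I.cI A
  | Concept.nom a => {I.indI a} ∩ I.dom
  | Concept.neg C => I.dom \ Concept.interp I C
  | Concept.conj C D => Concept.interp I C ∩ Concept.interp I D
  | Concept.ex r C => {d | ∃ e, (d, e) ∈ Role.interp I r ∧ e ∈ Concept.interp I C}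

def Assertion.sat (I : Interp U) : Assertion → Prop
  | Assertion.ca A a => I.indI a ∈ I.cI A
  | Assertion.ra r a b => (I.indI a, I.indI b) ∈ I.rI r

/-! ### Violations and cost -/

/-- Violations of a concept inclusion `C ⊑ D`. -/
def vioCI (I : Interp U) (C D : Concept) : Set U :=
  Concept.interp I C \ Concept.interp I D

/-- Violations of a role inclusion `r ⊑ s`. -/
def vioRI (I : Interp U) (r s : Role) : Set (U × U) :=
  Role.interp I r \ Role.interp I s

/-- The number of violations of an axiom. -/
noncomputable def Axiom.vioCount (I : Interp U) : Axiom → ℕ∞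
  | Axiom.ci C D => (vioCI I C D).encard
  | Axiom.ri r s => (vioRI I r s).encard

open Classical in
/-- The cost of an interpretation w.r.t. a weighted knowledge base `(T, A)` with weight
functions `wT` (on TBox axioms) and `wA` (on ABox assertions). -/
noncomputable def cost (T : Finset Axiom) (A : Finset Assertion)
    (wT : Axiom → ℕ∞) (wA : Assertion → ℕ∞) (I : Interp U) : ℕ∞ :=
  (∑ τ ∈ T, wT τ * Axiom.vioCount I τ) +
    ∑ α ∈ A, (if Assertion.sat I α then 0 else wA α)

/-! ### Queries -/

inductive Term where
  | var : ℕ → Term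
  | ind : IndName → Term
deriving DecidableEq

inductive QAtom where
  | ca : CName → Term → QAtom
  | ra : RName → Term → Term → QAtom
deriving DecidableEq

/-- A Boolean conjunctive query: a finite set of atoms, all of whose variables are
(implicitly) existentially quantified. -/
abbrev BCQ := Finset QAtom

def Term.eval (I : Interp U) (π : ℕ → U) : Term → U
  | Term.var v => π v
  | Term.ind a => I.indI a

def QAtom.sat (I : Interp U) (π : ℕ → U) : QAtom → Prop
  | QAtom.ca A t => Term.eval I π t ∈ I.cI A
  | QAtom.ra r t t' => (Term.eval I π t, Term.eval I π t') ∈ I.rI r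

/-- Satisfaction of a BCQ in an interpretation. -/
def satQ (I : Interp U) (q : BCQ) : Prop :=
  ∃ π : ℕ → U, (∀ v, π v ∈ I.dom) ∧ ∀ a ∈ q, QAtom.sat I π a

/-- An instance query is a BCQ with a single atom. -/
def IsIQ (q : BCQ) : Prop := ∃ a : QAtom, q = {a}

/-! ### Cost-based semantics -/

/-- `k`-satisfiability: some interpretation has cost at most `k`. -/
def ksat (T : Finset Axiom) (A : Finset Assertion)
    (wT : Axiom → ℕ∞) (wA : Assertion → ℕ∞) (k : ℕ) : Prop :=
  ∃ (U : Type) (I : Interp U), I.Proper ∧ cost T A wT wA I ≤ (k : ℕ∞)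

/-- `K ⊨ₚᵏ q`: some interpretation of cost at most `k` satisfies `q`. -/
def satP (T : Finset Axiom) (A : Finset Assertion)
    (wT : Axiom → ℕ∞) (wA : Assertion → ℕ∞) (k : ℕ) (q : BCQ) : Prop :=
  ∃ (U : Type) (I : Interp U), I.Proper ∧ cost T A wT wA I ≤ (k : ℕ∞) ∧ satQ I q

/-- `K ⊨꜀ᵏ q`: every interpretation of cost at most `k` satisfies `q`. -/
def satC (T : Finset Axiom) (A : Finset Assertion)
    (wT : Axiom → ℕ∞) (wA : Assertion → ℕ∞) (k : ℕ) (q : BCQ) : Prop :=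
  ∀ (U : Type) (I : Interp U), I.Proper → cost T A wT wA I ≤ (k : ℕ∞) → satQ I q

/-- The optimal cost of a weighted knowledge base. -/
noncomputable def optCost (T : Finset Axiom) (A : Finset Assertion)
    (wT : Axiom → ℕ∞) (wA : Assertion → ℕ∞) : ℕ∞ :=
  sInf {c : ℕ∞ | ∃ (U : Type) (I : Interp U), I.Proper ∧ cost T A wT wA I = c}

/-- `K ⊨ₚᵒᵖᵗ q`: some interpretation of optimal cost satisfies `q`. -/
noncomputable def satPopt (T : Finset Axiom) (A : Finset Assertion)
    (wT : Axiom → ℕ∞) (wA : Assertion → ℕ∞) (q : BCQ) : Prop :=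
  ∃ (U : Type) (I : Interp U), I.Proper ∧ cost T A wT wA I = optCost T A wT wA ∧ satQ I q

/-- `K ⊨꜀ᵒᵖᵗ q`: every interpretation of optimal cost satisfies `q`. -/
noncomputable def satCopt (T : Finset Axiom) (A : Finset Assertion)
    (wT : Axiom → ℕ∞) (wA : Assertion → ℕ∞) (q : BCQ) : Prop :=
  ∀ (U : Type) (I : Interp U), I.Proper → cost T A wT wA I = optCost T A wT wA → satQ I q

/-! ### Occurrences of symbols -/

def Role.base : Role → RName
  | Role.name r => r
  | Role.inv r => r

def Concept.cnames : Concept → Finset CName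
  | Concept.atom A => {A}
  | Concept.neg C => C.cnames
  | Concept.conj C D => C.cnames ∪ D.cnames
  | Concept.ex _ C => C.cnames
  | _ => ∅

def Concept.rnames : Concept → Finset RName
  | Concept.neg C => C.rnames
  | Concept.conj C D => C.rnames ∪ D.rnames
  | Concept.ex r C => insert r.base C.rnames
  | _ => ∅

def Concept.indNames : Concept → Finset IndName
  | Concept.nom a => {a}
  | Concept.neg C => C.indNames
  | Concept.conj C D => C.indNames ∪ D.indNames
  | Concept.ex _ C => C.indNames
  | _ => ∅

def Axiom.cnames : Axiom → Finset CName
  | Axiom.ci C D => C.cnames ∪ D.cnames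
  | Axiom.ri _ _ => ∅

def Axiom.rnames : Axiom → Finset RName
  | Axiom.ci C D => C.rnames ∪ D.rnames
  | Axiom.ri r s => {r.base, s.base}

def Axiom.indNames : Axiom → Finset IndName
  | Axiom.ci C D => C.indNames ∪ D.indNames
  | Axiom.ri _ _ => ∅

def Assertion.cnames : Assertion → Finset CName
  | Assertion.ca A _ => {A}
  | Assertion.ra _ _ _ => ∅

def Assertion.rnames : Assertion → Finset RName
  | Assertion.ca _ _ => ∅
  | Assertion.ra r _ _ => {r}

def Assertion.indNames : Assertion → Finset IndName
  | Assertion.ca _ a => {a}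
  | Assertion.ra _ a b => {a, b}

/-- The individual names occurring in an ABox. -/
def aboxInds (A : Finset Assertion) : Finset IndName := A.biUnion Assertion.indNames

/-- The individual names occurring in a KB. -/
def kbInds (T : Finset Axiom) (A : Finset Assertion) : Finset IndName :=
  T.biUnion Axiom.indNames ∪ aboxInds A

def Term.indNames : Term → Finset IndName
  | Term.var _ => ∅
  | Term.ind a => {a}

def QAtom.indNames : QAtom → Finset IndName
  | QAtom.ca _ t => t.indNames
  | QAtom.ra _ t t' => t.indNames ∪ t'.indNames

def QAtom.cnames : QAtom → Finset CName
  | QAtom.ca A _ => {A}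
  | QAtom.ra _ _ _ => ∅

def qInds (q : BCQ) : Finset IndName := q.biUnion QAtom.indNames

def qCnames (q : BCQ) : Finset CName := q.biUnion QAtom.cnames

/-! ### Sizes -/

def Concept.size : Concept → ℕ
  | Concept.top => 1
  | Concept.bot => 1
  | Concept.atom _ => 1
  | Concept.nom _ => 1
  | Concept.neg C => C.size + 1
  | Concept.conj C D => C.size + D.size + 1
  | Concept.ex _ C => C.size + 2

def Axiom.size : Axiom → ℕ
  | Axiom.ci C D => C.size + D.size + 1
  | Axiom.ri _ _ => 3

def Assertion.size : Assertion → ℕ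
  | Assertion.ca _ _ => 2
  | Assertion.ra _ _ _ => 3

def tboxSize (T : Finset Axiom) : ℕ := ∑ τ ∈ T, τ.size

def aboxSize (A : Finset Assertion) : ℕ := ∑ α ∈ A, α.size

/-! ### DL-Lite fragments -/

/-- Basic concepts: concept names and unqualified existential restrictions `∃r` (with a
possibly inverse role `r`), the latter rendered as `∃r.⊤`. -/
inductive IsBasic : Concept → Prop
  | atom (A : CName) : IsBasic (Concept.atom A)
  | ex (r : Role) : IsBasic (Concept.ex r Concept.top)

/-- A `DL-Lite_core` axiom: `B ⊑ C` or `B ⊓ C ⊑ ⊥` with `B, C` basic concepts. -/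
def IsCoreAxiom (τ : Axiom) : Prop :=
  (∃ B C, τ = Axiom.ci B C ∧ IsBasic B ∧ IsBasic C) ∨
  (∃ B C, τ = Axiom.ci (Concept.conj B C) Concept.bot ∧ IsBasic B ∧ IsBasic C)

def IsDLLiteCore (T : Finset Axiom) : Prop := ∀ τ ∈ T, IsCoreAxiom τ

/-- Concepts built from basic concepts using `¬`, `⊓` (and hence also `⊔`). -/
inductive IsBoolConcept : Concept → Prop
  | basic {C} : IsBasic C → IsBoolConcept C
  | neg {C} : IsBoolConcept C → IsBoolConcept (Concept.neg C)
  | conj {C D} : IsBoolConcept C → IsBoolConcept D → IsBoolConcept (Concept.conj C D)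

/-- A `DL-Lite_bool^H` axiom: a concept inclusion between Boolean combinations of basic
concepts, or a role inclusion. -/
def IsBoolHAxiom (τ : Axiom) : Prop :=
  (∃ C D, τ = Axiom.ci C D ∧ IsBoolConcept C ∧ IsBoolConcept D) ∨ (∃ r s, τ = Axiom.ri r s)

def IsDLLiteBoolH (T : Finset Axiom) : Prop := ∀ τ ∈ T, IsBoolHAxiom τ

/-! Encoding of a 3-CNF formula `φ = c_0 ∧ … ∧ c_{m-1}` over variables `x_0,…,x_{n-1}`:
`φ j ℓ = (b, x)` where `b = true` iff the `ℓ`-th literal of `c_j` is the positive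
literal `x` (and `b = false` iff it is `¬x`). -/

/-- The concept name `T` ("true"). -/
def cT : CName := 0

/-- Role names `p_ℓ` and `n_ℓ`. -/
def pR (l : Fin 3) : RName := (l : ℕ)
def nR (l : Fin 3) : RName := 3 + (l : ℕ)

/-- Individual names for variables and clauses. -/
def xN (i : Fin n') : IndName := (i : ℕ)
def clN (n : ℕ) (j : Fin m') : IndName := n + (j : ℕ)

def exR (r : RName) : Concept := Concept.ex (Role.name r) Concept.top
def exRinv (r : RName) : Concept := Concept.ex (Role.inv r) Concept.top

/-- The `DL-Lite_core` TBox of the reduction. -/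
def lexTbox : Finset Axiom :=
  ((Finset.univ : Finset (Fin 3)).image
    fun l => Axiom.ci (exRinv (nR l)) (Concept.neg (Concept.atom cT))) ∪
  ((Finset.univ : Finset (Fin 3 × Fin 3)).image
    fun x => Axiom.ci (exR (pR x.1)) (Concept.neg (exR (nR x.2)))) ∪
  ((Finset.univ : Finset (Fin 3 × Fin 3)).image
    fun x => Axiom.ci (exRinv (pR x.1)) (Concept.neg (exRinv (nR x.2)))) ∪
  (((Finset.univ : Finset (Fin 3 × Fin 3)).filter fun x => x.1 ≠ x.2).image
    fun x => Axiom.ci (exR (pR x.1)) (Concept.neg (exR (pR x.2)))) ∪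
  (((Finset.univ : Finset (Fin 3 × Fin 3)).filter fun x => x.1 ≠ x.2).image
    fun x => Axiom.ci (exR (nR x.1)) (Concept.neg (exR (nR x.2))))

/-- The ABox of the reduction. -/
def lexAbox (m n : ℕ) (φ : Fin m → Fin 3 → Bool × Fin n) : Finset Assertion :=
  (Finset.univ.image fun p : Fin m × Fin 3 =>
    if (φ p.1 p.2).1 then Assertion.ra (pR p.2) (clN n p.1) (xN (φ p.1 p.2).2)
    else Assertion.ra (nR p.2) (clN n p.1) (xN (φ p.1 p.2).2)) ∪
  (Finset.univ.image fun i : Fin n => Assertion.ca cT (xN i))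

/-- The weight function on assertions: with `u = 3m + 1`, every role assertion gets
weight `u^n` and the assertion `T(x_i)` gets weight `u^(n-1-i)` (for the 0-indexed
variable `x_i`, corresponding to `u^(n-i)` in 1-indexed notation). -/
noncomputable def lexWA (m n : ℕ) : Assertion → ℕ∞
  | Assertion.ca _ i => ((3 * m + 1 : ℕ) : ℕ∞) ^ (n - 1 - i)
  | Assertion.ra _ _ _ => ((3 * m + 1 : ℕ) : ℕ∞) ^ n

/-- `ν` satisfies `φ`. -/
def SatCNF (m n : ℕ) (φ : Fin m → Fin 3 → Bool × Fin n) (ν : Fin n → Bool) : Prop :=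
  ∀ j : Fin m, ∃ l : Fin 3, ν (φ j l).2 = (φ j l).1

/-- Lexicographic comparison of truth assignments w.r.t. the ordering `(x_0,…,x_{n-1})`:
`ν' ≤ ν` iff they are equal or `ν` is `true` at the first index where they differ. -/
def LexLE {n : ℕ} (ν' ν : Fin n → Bool) : Prop :=
  ν' = ν ∨ ∃ i : Fin n, (∀ j < i, ν' j = ν j) ∧ ν' i ≠ ν i ∧ ν i = true

/-- `ν` is the lexicographically maximum satisfying assignment of `φ`. -/
def IsLexMax (m n : ℕ) (φ : Fin m → Fin 3 → Bool × Fin n) (ν : Fin n → Bool) : Prop :=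
  SatCNF m n φ ν ∧ ∀ ν', SatCNF m n φ ν' → LexLE ν' ν


/-! ### Auxiliary development for Statement 14 -/

section S14

/-- Geometric sum bound. -/
lemma S14.geom_lt {u : ℕ} (hu : 2 ≤ u) (k : ℕ) : ∑ t ∈ Finset.range k, u ^ t < u ^ k := by
  induction k with
  | zero => simp
  | succ k ih =>
    rw [Finset.sum_range_succ, pow_succ]
    have h2 : u ^ k * 2 ≤ u ^ k * u := Nat.mul_le_mul_left _ hu
    omega

/-- The weight of an assignment: sum of `u^(n-1-i)` over false positions. -/
def S14.trm (u n : ℕ) (ν : Fin n → Bool) (j : Fin n) : ℕ :=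
  if ν j then 0 else u ^ (n - 1 - (j : ℕ))

def S14.wgt (u n : ℕ) (ν : Fin n → Bool) : ℕ := ∑ i : Fin n, S14.trm u n ν i

lemma S14.trm_le {u n : ℕ} (ν : Fin n → Bool) (j : Fin n) :
    S14.trm u n ν j ≤ u ^ (n - 1 - (j : ℕ)) := by
  rw [S14.trm]; split <;> simp

lemma S14.trm_mono {u n : ℕ} {ν ν' : Fin n → Bool} {j : Fin n}
    (h : ν j = true → ν' j = true) : S14.trm u n ν' j ≤ S14.trm u n ν j := by
  rw [S14.trm, S14.trm]
  cases hj : ν j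
  · cases ν' j <;> simp
  · simp [h hj]

lemma S14.wgt_le {u n : ℕ} (ν : Fin n → Bool) :
    S14.wgt u n ν ≤ ∑ t ∈ Finset.range n, u ^ t := by
  have h1 : S14.wgt u n ν ≤ ∑ i : Fin n, u ^ (n - 1 - (i : ℕ)) :=
    Finset.sum_le_sum fun i _ => S14.trm_le ν i
  have h2 : (∑ i : Fin n, u ^ (n - 1 - (i : ℕ))) = ∑ t ∈ Finset.range n, u ^ t := by
    rw [Fin.sum_univ_eq_sum_range (fun t => u ^ (n - 1 - t)) n]
    exact Finset.sum_range_reflect (fun t => u ^ t) n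
  omega

lemma S14.wgt_lt {u n : ℕ} (hu : 2 ≤ u) (ν : Fin n → Bool) : S14.wgt u n ν < u ^ n :=
  lt_of_le_of_lt (S14.wgt_le ν) (S14.geom_lt hu n)

lemma S14.eq_true_of_wgt_zero {u n : ℕ} (hu : 1 ≤ u) {ν : Fin n → Bool}
    (h : S14.wgt u n ν = 0) (i : Fin n) : ν i = true := by
  by_contra hi
  have hmem : S14.trm u n ν i ≤ S14.wgt u n ν :=
    Finset.single_le_sum (f := S14.trm u n ν) (fun j _ => Nat.zero_le _) (Finset.mem_univ i)
  rw [S14.trm, if_neg (by simpa using hi)] at hmem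
  have : 1 ≤ u ^ (n - 1 - (i : ℕ)) := Nat.one_le_pow _ _ hu
  omega

/-- Strict monotonicity of `wgt` w.r.t. lexicographic order. -/
lemma S14.wgt_lt_of_lex {u n : ℕ} (hu : 2 ≤ u) {ν' ν : Fin n → Bool} (i : Fin n)
    (hlt : ∀ j, j < i → ν' j = ν j) (hne : ν' i ≠ ν i) (hi : ν i = true) :
    S14.wgt u n ν < S14.wgt u n ν' := by
  classical
  have hi' : ν' i = false := by
    cases h : ν' i
    · rfl
    · exact absurd (h.trans hi.symm) hne
  have hsplit : ∀ μ : Fin n → Bool, S14.wgt u n μ =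
      (∑ j ∈ Finset.univ.filter (· < i), S14.trm u n μ j) + S14.trm u n μ i +
        ∑ j ∈ Finset.univ.filter (i < ·), S14.trm u n μ j := by
    intro μ
    have h1 : (Finset.univ.filter (fun j => ¬ j < i)) =
        insert i (Finset.univ.filter (i < ·)) := by
      ext j
      simp only [Finset.mem_filter, Finset.mem_univ, true_and, Finset.mem_insert]
      constructor
      · intro h
        rcases lt_or_eq_of_le (le_of_not_gt h) with h' | h'
        · exact Or.inr h'
        · exact Or.inl h'.symm
      · rintro (rfl | h)
        · exact lt_irrefl _
        · exact not_lt.mpr h.le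
    have h2 : i ∉ Finset.univ.filter (i < ·) := by simp
    calc S14.wgt u n μ
        = (∑ j ∈ Finset.univ.filter (· < i), S14.trm u n μ j) +
            ∑ j ∈ Finset.univ.filter (fun j => ¬ j < i), S14.trm u n μ j :=
          (Finset.sum_filter_add_sum_filter_not _ _ _).symm
      _ = _ := by rw [h1, Finset.sum_insert h2]; ring
  have hA : (∑ j ∈ Finset.univ.filter (· < i), S14.trm u n ν j) =
      ∑ j ∈ Finset.univ.filter (· < i), S14.trm u n ν' j := by
    refine Finset.sum_congr rfl fun j hj => ?_
    rw [S14.trm, S14.trm, hlt j (by simpa using hj)]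
  have hS : (∑ j ∈ Finset.univ.filter (i < ·), S14.trm u n ν j) <
      u ^ (n - 1 - (i : ℕ)) := by
    have hle : (∑ j ∈ Finset.univ.filter (i < ·), S14.trm u n ν j) ≤
        ∑ j ∈ Finset.univ.filter (i < ·), u ^ (n - 1 - (j : ℕ)) :=
      Finset.sum_le_sum fun j _ => S14.trm_le ν j
    have himg : (∑ j ∈ Finset.univ.filter (i < ·), u ^ (n - 1 - (j : ℕ))) =
        ∑ t ∈ (Finset.univ.filter (i < ·)).image (fun j : Fin n => n - 1 - (j : ℕ)),
          u ^ t := by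
      rw [Finset.sum_image]
      intro a ha b hb hab
      have ha' : (i : ℕ) < (a : ℕ) := Fin.lt_def.mp (Finset.mem_filter.mp ha).2
      have hb' : (i : ℕ) < (b : ℕ) := Fin.lt_def.mp (Finset.mem_filter.mp hb).2
      have := a.isLt; have := b.isLt
      have hab' : n - 1 - (a : ℕ) = n - 1 - (b : ℕ) := hab
      exact Fin.ext (by omega)
    have hsub : (Finset.univ.filter (i < ·)).image (fun j : Fin n => n - 1 - (j : ℕ)) ⊆
        Finset.range (n - 1 - (i : ℕ)) := by
      intro t ht
      simp only [Finset.mem_image, Finset.mem_filter, Finset.mem_univ, true_and] at ht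
      obtain ⟨j, hj, rfl⟩ := ht
      have hj' : (i : ℕ) < (j : ℕ) := Fin.lt_def.mp hj
      have := j.isLt
      simp only [Finset.mem_range]
      omega
    have hle2 : (∑ t ∈ (Finset.univ.filter (i < ·)).image
          (fun j : Fin n => n - 1 - (j : ℕ)), u ^ t) ≤
        ∑ t ∈ Finset.range (n - 1 - (i : ℕ)), u ^ t :=
      Finset.sum_le_sum_of_subset hsub
    have := S14.geom_lt hu (n - 1 - (i : ℕ))
    omega
  have hfi : S14.trm u n ν i = 0 := by rw [S14.trm]; simp [hi]
  have hfi' : S14.trm u n ν' i = u ^ (n - 1 - (i : ℕ)) := by rw [S14.trm]; simp [hi']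
  have hS' : (0 : ℕ) ≤ ∑ j ∈ Finset.univ.filter (i < ·), S14.trm u n ν' j := Nat.zero_le _
  rw [hsplit ν, hsplit ν', hA, hfi, hfi']
  omega


lemma S14.lexmax_eq {m n : ℕ} {φ : Fin m → Fin 3 → Bool × Fin n} {νmax ν : Fin n → Bool}
    (hmax : IsLexMax m n φ νmax) (hν : SatCNF m n φ ν)
    (hw : S14.wgt (3 * m + 1) n ν ≤ S14.wgt (3 * m + 1) n νmax) : ν = νmax := by
  rcases Nat.eq_zero_or_pos m with hm | hm
  · subst hm
    have hall : SatCNF 0 n φ (fun _ => true) := fun j => j.elim0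
    have hmx : νmax = fun _ => true := by
      rcases hmax.2 _ hall with h | ⟨i, _, hne, hit⟩
      · exact h.symm
      · exact absurd hit.symm hne
    have hz : S14.wgt (3 * 0 + 1) n νmax = 0 := by
      rw [S14.wgt]
      refine Finset.sum_eq_zero fun i _ => ?_
      rw [S14.trm, hmx]
      simp
    rw [hz, Nat.le_zero] at hw
    funext i
    rw [hmx, S14.eq_true_of_wgt_zero (by omega) hw i]
  · rcases hmax.2 ν hν with h | ⟨i, hlt, hne, hit⟩
    · exact h
    · exact absurd hw (not_le.mpr (S14.wgt_lt_of_lex (by omega) i hlt hne hit))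

variable {U : Type}

lemma S14.interp_exR {I : Interp U} {r : RName} {d : U} :
    d ∈ Concept.interp I (exR r) ↔ ∃ e, (d, e) ∈ I.rI r := by
  simp only [exR, Concept.interp, Role.interp, Set.mem_setOf_eq]
  constructor
  · rintro ⟨e, he, -⟩; exact ⟨e, he⟩
  · rintro ⟨e, he⟩; exact ⟨e, he, (I.rI_sub r _ he).2⟩

lemma S14.interp_exRinv {I : Interp U} {r : RName} {d : U} :
    d ∈ Concept.interp I (exRinv r) ↔ ∃ e, (e, d) ∈ I.rI r := by
  simp only [exRinv, Concept.interp, Role.interp, Set.mem_setOf_eq]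
  constructor
  · rintro ⟨e, he, -⟩; exact ⟨e, he⟩
  · rintro ⟨e, he⟩; exact ⟨e, he, (I.rI_sub r _ he).1⟩

lemma S14.vio_zero_iff {I : Interp U} {C D : Concept} :
    Axiom.vioCount I (Axiom.ci C D) = 0 ↔ Concept.interp I C ⊆ Concept.interp I D := by
  rw [Axiom.vioCount]
  rw [Set.encard_eq_zero, vioCI, Set.diff_eq_empty]

lemma S14.mem_lexTbox_1 (l : Fin 3) :
    Axiom.ci (exRinv (nR l)) (Concept.neg (Concept.atom cT)) ∈ lexTbox := by
  rw [lexTbox]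
  refine Finset.mem_union_left _ (Finset.mem_union_left _ (Finset.mem_union_left _
    (Finset.mem_union_left _ ?_)))
  exact Finset.mem_image_of_mem _ (Finset.mem_univ l)

lemma S14.mem_lexTbox_2 (a b : Fin 3) :
    Axiom.ci (exR (pR a)) (Concept.neg (exR (nR b))) ∈ lexTbox := by
  rw [lexTbox]
  refine Finset.mem_union_left _ (Finset.mem_union_left _ (Finset.mem_union_left _
    (Finset.mem_union_right _ ?_)))
  exact Finset.mem_image_of_mem _ (Finset.mem_univ (a, b))

lemma S14.mem_lexTbox_3 (a b : Fin 3) :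
    Axiom.ci (exRinv (pR a)) (Concept.neg (exRinv (nR b))) ∈ lexTbox := by
  rw [lexTbox]
  refine Finset.mem_union_left _ (Finset.mem_union_left _ (Finset.mem_union_right _ ?_))
  exact Finset.mem_image_of_mem _ (Finset.mem_univ (a, b))

lemma S14.mem_lexTbox_4 {a b : Fin 3} (hab : a ≠ b) :
    Axiom.ci (exR (pR a)) (Concept.neg (exR (pR b))) ∈ lexTbox := by
  rw [lexTbox]
  refine Finset.mem_union_left _ (Finset.mem_union_right _ ?_)
  exact Finset.mem_image_of_mem
    (fun x : Fin 3 × Fin 3 => Axiom.ci (exR (pR x.1)) (Concept.neg (exR (pR x.2))))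
    (Finset.mem_filter.mpr ⟨Finset.mem_univ (a, b), hab⟩)

lemma S14.mem_lexTbox_5 {a b : Fin 3} (hab : a ≠ b) :
    Axiom.ci (exR (nR a)) (Concept.neg (exR (nR b))) ∈ lexTbox := by
  rw [lexTbox]
  refine Finset.mem_union_right _ ?_
  exact Finset.mem_image_of_mem
    (fun x : Fin 3 × Fin 3 => Axiom.ci (exR (nR x.1)) (Concept.neg (exR (nR x.2))))
    (Finset.mem_filter.mpr ⟨Finset.mem_univ (a, b), hab⟩)

section TB
variable {I : Interp U} (hT : ∀ τ ∈ lexTbox, Axiom.vioCount I τ = 0)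
include hT

lemma S14.tb1 {l : Fin 3} {d e : U} (h : (e, d) ∈ I.rI (nR l)) : d ∉ I.cI cT := by
  have hsub := S14.vio_zero_iff.mp (hT _ (S14.mem_lexTbox_1 l))
  have hd := hsub (S14.interp_exRinv.mpr ⟨e, h⟩)
  simp only [Concept.interp, Set.mem_diff] at hd
  exact hd.2

lemma S14.tb2 {a b : Fin 3} {d e e' : U} (h1 : (d, e) ∈ I.rI (pR a))
    (h2 : (d, e') ∈ I.rI (nR b)) : False := by
  have hsub := S14.vio_zero_iff.mp (hT _ (S14.mem_lexTbox_2 a b))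
  have hd := hsub (S14.interp_exR.mpr ⟨e, h1⟩)
  simp only [Concept.interp, Set.mem_diff] at hd
  exact hd.2 (S14.interp_exR.mpr ⟨e', h2⟩)

lemma S14.tb3 {a b : Fin 3} {d e e' : U} (h1 : (e, d) ∈ I.rI (pR a))
    (h2 : (e', d) ∈ I.rI (nR b)) : False := by
  have hsub := S14.vio_zero_iff.mp (hT _ (S14.mem_lexTbox_3 a b))
  have hd := hsub (S14.interp_exRinv.mpr ⟨e, h1⟩)
  simp only [Concept.interp, Set.mem_diff] at hd
  exact hd.2 (S14.interp_exRinv.mpr ⟨e', h2⟩)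

lemma S14.tb4 {a b : Fin 3} (hab : a ≠ b) {d e e' : U} (h1 : (d, e) ∈ I.rI (pR a))
    (h2 : (d, e') ∈ I.rI (pR b)) : False := by
  have hsub := S14.vio_zero_iff.mp (hT _ (S14.mem_lexTbox_4 hab))
  have hd := hsub (S14.interp_exR.mpr ⟨e, h1⟩)
  simp only [Concept.interp, Set.mem_diff] at hd
  exact hd.2 (S14.interp_exR.mpr ⟨e', h2⟩)

lemma S14.tb5 {a b : Fin 3} (hab : a ≠ b) {d e e' : U} (h1 : (d, e) ∈ I.rI (nR a))
    (h2 : (d, e') ∈ I.rI (nR b)) : False := by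
  have hsub := S14.vio_zero_iff.mp (hT _ (S14.mem_lexTbox_5 hab))
  have hd := hsub (S14.interp_exR.mpr ⟨e, h1⟩)
  simp only [Concept.interp, Set.mem_diff] at hd
  exact hd.2 (S14.interp_exR.mpr ⟨e', h2⟩)

end TB


def S14.edgeA (m n : ℕ) (φ : Fin m → Fin 3 → Bool × Fin n) (p : Fin m × Fin 3) : Assertion :=
  if (φ p.1 p.2).1 then Assertion.ra (pR p.2) (clN n p.1) (xN (φ p.1 p.2).2)
  else Assertion.ra (nR p.2) (clN n p.1) (xN (φ p.1 p.2).2)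

lemma S14.lexAbox_eq (m n : ℕ) (φ : Fin m → Fin 3 → Bool × Fin n) :
    lexAbox m n φ = (Finset.univ.image (S14.edgeA m n φ)) ∪
      (Finset.univ.image fun i : Fin n => Assertion.ca cT (xN i)) := rfl

lemma S14.edgeA_inj {m n : ℕ} {φ : Fin m → Fin 3 → Bool × Fin n} :
    Function.Injective (S14.edgeA m n φ) := by
  rintro ⟨j, l⟩ ⟨j', l'⟩ h
  have hl := l.isLt
  have hl' := l'.isLt
  rw [S14.edgeA, S14.edgeA] at h
  simp only at h
  refine Prod.ext_iff.mpr ⟨Fin.ext ?_, Fin.ext ?_⟩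
  · show (j : ℕ) = (j' : ℕ)
    split_ifs at h <;> simp only [Assertion.ra.injEq, pR, nR, clN, xN] at h <;>
      · obtain ⟨h1, h2, -⟩ := h
        have h2' : n + (j : ℕ) = n + (j' : ℕ) := h2
        omega
  · show (l : ℕ) = (l' : ℕ)
    split_ifs at h <;> simp only [Assertion.ra.injEq, pR, nR, clN, xN] at h <;>
      · obtain ⟨h1, h2, -⟩ := h
        first
        | (have h1' : (l : ℕ) = (l' : ℕ) := h1; omega)
        | (have h1' : (l : ℕ) = 3 + (l' : ℕ) := h1; omega)
        | (have h1' : 3 + (l : ℕ) = (l' : ℕ) := h1; omega)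
        | (have h1' : 3 + (l : ℕ) = 3 + (l' : ℕ) := h1; omega)

lemma S14.abox_disj {m n : ℕ} {φ : Fin m → Fin 3 → Bool × Fin n} :
    Disjoint (Finset.univ.image (S14.edgeA m n φ))
      (Finset.univ.image fun i : Fin n => Assertion.ca cT (xN i)) := by
  rw [Finset.disjoint_left]
  rintro α hα hβ
  simp only [Finset.mem_image, Finset.mem_univ, true_and] at hα hβ
  obtain ⟨p, rfl⟩ := hα
  obtain ⟨i, hi⟩ := hβ
  rw [S14.edgeA] at hi
  split_ifs at hi

lemma S14.sat_edgeA {m n : ℕ} {φ : Fin m → Fin 3 → Bool × Fin n} {I : Interp U}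
    {j : Fin m} {l : Fin 3} :
    Assertion.sat I (S14.edgeA m n φ (j, l)) ↔
      (I.indI (clN n j), I.indI (xN (φ j l).2)) ∈
        I.rI (if (φ j l).1 then pR l else nR l) := by
  rw [S14.edgeA]
  cases h : (φ j l).1 <;> simp only [h] <;> simp [Assertion.sat]

open Classical in
lemma S14.cost_eq {m n : ℕ} {φ : Fin m → Fin 3 → Bool × Fin n} {I : Interp U}
    (hT : ∀ τ ∈ lexTbox, Axiom.vioCount I τ = 0) :
    cost lexTbox (lexAbox m n φ) (fun _ => ⊤) (lexWA m n) I =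
      (((∑ p : Fin m × Fin 3, if Assertion.sat I (S14.edgeA m n φ p) then 0
          else (3 * m + 1) ^ n) +
        ∑ i : Fin n, if I.indI (xN i) ∈ I.cI cT then 0
          else (3 * m + 1) ^ (n - 1 - (i : ℕ)) : ℕ) : ℕ∞) := by
  rw [cost]
  have h1 : (∑ τ ∈ lexTbox, (fun _ => (⊤ : ℕ∞)) τ * Axiom.vioCount I τ) = 0 :=
    Finset.sum_eq_zero fun τ hτ => by rw [hT τ hτ, mul_zero]
  have hinj2 : ∀ i ∈ (Finset.univ : Finset (Fin n)), ∀ i' ∈ (Finset.univ : Finset (Fin n)),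
      Assertion.ca cT (xN i) = Assertion.ca cT (xN i') → i = i' := by
    intro i _ i' _ h
    simp only [Assertion.ca.injEq, xN] at h
    exact Fin.ext h.2
  rw [h1, zero_add, S14.lexAbox_eq, Finset.sum_union S14.abox_disj,
    Finset.sum_image (fun p _ q _ h => S14.edgeA_inj h), Finset.sum_image hinj2,
    Nat.cast_add, Nat.cast_sum, Nat.cast_sum]
  congr 1
  · refine Finset.sum_congr rfl fun p _ => ?_
    have hw : lexWA m n (S14.edgeA m n φ p) = (((3 * m + 1) ^ n : ℕ) : ℕ∞) := by
      rw [S14.edgeA]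
      split_ifs <;> simp [lexWA]
    rw [hw]
    split_ifs <;> simp
  · refine Finset.sum_congr rfl fun i _ => ?_
    have hs : Assertion.sat I (Assertion.ca cT (xN i)) ↔ I.indI (xN i) ∈ I.cI cT :=
      Iff.rfl
    have hw : lexWA m n (Assertion.ca cT (xN i)) =
        (((3 * m + 1) ^ (n - 1 - (i : ℕ)) : ℕ) : ℕ∞) := by
      simp [lexWA, xN]
    rw [hw]
    split_ifs with h h' h' <;> simp_all


lemma S14.sum3_no {c : ℕ} {P : Fin 3 → Prop} [DecidablePred P] (h : ∀ l, ¬ P l) :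
    (∑ l : Fin 3, if P l then 0 else c) = 3 * c := by
  rw [Fin.sum_univ_three, if_neg (h 0), if_neg (h 1), if_neg (h 2)]
  ring

lemma S14.sum3_one {c : ℕ} {P : Fin 3 → Prop} [DecidablePred P] {l0 : Fin 3}
    (h0 : P l0) (huniq : ∀ l l', P l → P l' → l = l') :
    (∑ l : Fin 3, if P l then 0 else c) = 2 * c := by
  have hiff : ∀ l, P l ↔ l = l0 := fun l => ⟨fun h => huniq l l0 h h0, fun h => h ▸ h0⟩
  calc (∑ l : Fin 3, if P l then 0 else c)
      = ∑ l : Fin 3, if l = l0 then 0 else c :=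
        Finset.sum_congr rfl fun l _ => if_congr (hiff l) rfl rfl
    _ = 2 * c := by
        rw [← Finset.add_sum_erase _ _ (Finset.mem_univ l0), if_pos rfl, zero_add,
          Finset.sum_congr rfl (fun l hl => if_neg (Finset.ne_of_mem_erase hl)),
          Finset.sum_const, Finset.card_erase_of_mem (Finset.mem_univ l0)]
        simp [Finset.card_univ]

open Classical in
lemma S14.main_lb {m n : ℕ} {φ : Fin m → Fin 3 → Bool × Fin n} {νmax : Fin n → Bool}
    (hmax : IsLexMax m n φ νmax) {U : Type} (I : Interp U)
    (hc : cost lexTbox (lexAbox m n φ) (fun _ => ⊤) (lexWA m n) I ≤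
      ((2 * m * (3 * m + 1) ^ n + S14.wgt (3 * m + 1) n νmax : ℕ) : ℕ∞)) :
    cost lexTbox (lexAbox m n φ) (fun _ => ⊤) (lexWA m n) I =
      ((2 * m * (3 * m + 1) ^ n + S14.wgt (3 * m + 1) n νmax : ℕ) : ℕ∞) ∧
    ∀ i : Fin n, (I.indI (xN i) ∈ I.cI cT ↔ νmax i = true) := by
  classical
  have hfin : cost lexTbox (lexAbox m n φ) (fun _ => ⊤) (lexWA m n) I ≠ ⊤ := by
    intro h
    rw [h, top_le_iff] at hc
    exact ENat.coe_ne_top _ hc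
  -- Step 1: no TBox violations
  have hT : ∀ τ ∈ lexTbox, Axiom.vioCount I τ = 0 := by
    intro τ hτ
    by_contra hv
    refine hfin (top_le_iff.mp ?_)
    calc (⊤ : ℕ∞) = (fun _ => (⊤ : ℕ∞)) τ * Axiom.vioCount I τ := by
          rw [ENat.top_mul hv]
      _ ≤ ∑ τ ∈ lexTbox, (fun _ => (⊤ : ℕ∞)) τ * Axiom.vioCount I τ :=
          Finset.single_le_sum
            (f := fun τ => (fun _ => (⊤ : ℕ∞)) τ * Axiom.vioCount I τ)
            (fun τ _ => zero_le) hτ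
      _ ≤ cost lexTbox (lexAbox m n φ) (fun _ => ⊤) (lexWA m n) I := by
          rw [cost]; exact le_self_add
  rw [S14.cost_eq hT] at hc ⊢
  have hc' : (∑ p : Fin m × Fin 3, if Assertion.sat I (S14.edgeA m n φ p) then 0
        else (3 * m + 1) ^ n) +
      (∑ i : Fin n, if I.indI (xN i) ∈ I.cI cT then 0
        else (3 * m + 1) ^ (n - 1 - (i : ℕ))) ≤
      2 * m * (3 * m + 1) ^ n + S14.wgt (3 * m + 1) n νmax := Nat.cast_le.mp hc
  -- Bool assignments extracted from I
  set νI : Fin n → Bool := fun i => decide (I.indI (xN i) ∈ I.cI cT) with hνI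
  have hνI_iff : ∀ i, νI i = true ↔ I.indI (xN i) ∈ I.cI cT := by
    intro i; rw [hνI]; simp
  set kept : Fin m → Fin 3 → Prop :=
    fun j l => Assertion.sat I (S14.edgeA m n φ (j, l)) with hkept
  set νI' : Fin n → Bool :=
    fun i => decide (¬ ∃ j l, (φ j l).1 = false ∧ (φ j l).2 = i ∧ kept j l) with hνI'
  have hνI'_true : ∀ i, νI' i = true ↔
      ¬ ∃ j l, (φ j l).1 = false ∧ (φ j l).2 = i ∧ kept j l := by
    intro i; rw [hνI']; simp
  have ht : (∑ i : Fin n, if I.indI (xN i) ∈ I.cI cT then 0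
      else (3 * m + 1) ^ (n - 1 - (i : ℕ))) = S14.wgt (3 * m + 1) n νI := by
    rw [S14.wgt]
    refine Finset.sum_congr rfl fun i _ => ?_
    rw [S14.trm]
    exact if_congr (hνI_iff i).symm rfl rfl
  -- clause uniqueness
  have huniq : ∀ j l l', kept j l → kept j l' → l = l' := by
    intro j l l' h h'
    by_contra hne
    rw [hkept] at h h'
    rw [S14.sat_edgeA] at h h'
    cases hb : (φ j l).1 <;> cases hb' : (φ j l').1 <;>
      rw [hb] at h <;> rw [hb'] at h' <;> simp only [Bool.false_eq_true, if_false,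
        if_true, reduceIte] at h h'
    · exact S14.tb5 hT hne h h'
    · exact S14.tb2 hT h' h
    · exact S14.tb2 hT h h'
    · exact S14.tb4 hT hne h h'
  have hR : (∑ p : Fin m × Fin 3, if Assertion.sat I (S14.edgeA m n φ p) then 0
        else (3 * m + 1) ^ n) =
      ∑ j : Fin m, ∑ l : Fin 3, if kept j l then 0 else (3 * m + 1) ^ n := by
    rw [Fintype.sum_prod_type]
  have hF1 : ∀ i, νI i = true → νI' i = true := by
    intro i hi
    rw [hνI_iff] at hi
    rw [hνI'_true]
    rintro ⟨j, l, hneg, hvar, hk⟩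
    rw [hkept] at hk
    rw [S14.sat_edgeA, hneg] at hk
    simp only [Bool.false_eq_true, if_false, reduceIte] at hk
    rw [hvar] at hk
    exact S14.tb1 hT hk hi
  have hwmono : S14.wgt (3 * m + 1) n νI' ≤ S14.wgt (3 * m + 1) n νI :=
    Finset.sum_le_sum fun i _ => S14.trm_mono (hF1 i)
  by_cases hall : ∀ j : Fin m, ∃ l, kept j l
  · -- every clause keeps exactly one edge
    have hReq : (∑ j : Fin m, ∑ l : Fin 3, if kept j l then 0 else (3 * m + 1) ^ n) =
        2 * m * (3 * m + 1) ^ n := by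
      rw [Finset.sum_congr rfl
        (fun j _ => S14.sum3_one (hall j).choose_spec (huniq j)),
        Finset.sum_const, Finset.card_univ, Fintype.card_fin, smul_eq_mul]
      ring
    rw [hR, hReq, ht] at hc'
    have htle : S14.wgt (3 * m + 1) n νI ≤ S14.wgt (3 * m + 1) n νmax :=
      le_of_add_le_add_left hc'
    -- νI' is a satisfying assignment
    have hsat' : SatCNF m n φ νI' := by
      intro j
      obtain ⟨l, hl⟩ := hall j
      refine ⟨l, ?_⟩
      cases hb : (φ j l).1
      · rw [← Bool.not_eq_true, hνI'_true]
        intro hno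
        exact hno ⟨j, l, hb, rfl, hl⟩
      · rw [hνI'_true]
        rintro ⟨j', l', hneg, hvar, hk⟩
        have hl2 := hl
        rw [hkept] at hl2 hk
        rw [S14.sat_edgeA, hb] at hl2
        rw [S14.sat_edgeA, hneg] at hk
        simp only [Bool.false_eq_true, if_false, if_true, reduceIte] at hl2 hk
        rw [hvar] at hk
        exact (S14.tb3 hT hl2 hk).elim
    have hνI'max : νI' = νmax :=
      S14.lexmax_eq hmax hsat' (le_trans hwmono htle)
    have hw2 : S14.wgt (3 * m + 1) n νmax ≤ S14.wgt (3 * m + 1) n νI := by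
      rw [← hνI'max]; exact hwmono
    have hweq : S14.wgt (3 * m + 1) n νI = S14.wgt (3 * m + 1) n νmax :=
      le_antisymm htle hw2
    have hpt : ∀ i, νI i = νmax i := by
      intro i
      rw [← hνI'max]
      cases hb : νI i
      · cases hb' : νI' i
        · rfl
        · exfalso
          have hlt : S14.wgt (3 * m + 1) n νI' < S14.wgt (3 * m + 1) n νI := by
            refine Finset.sum_lt_sum (fun i _ => S14.trm_mono (hF1 i))
              ⟨i, Finset.mem_univ i, ?_⟩
            rw [S14.trm, S14.trm, hb, hb']
            simp only [if_true, Bool.false_eq_true, if_false, reduceIte]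
            positivity
          rw [hνI'max] at hlt
          omega
      · exact (hF1 i hb).symm
    constructor
    · rw [hR, hReq, ht, hweq]
    · intro i
      rw [← hνI_iff i, hpt i]
  · -- some clause keeps no edge : contradiction with the cost bound
    exfalso
    push_neg at hall
    obtain ⟨j0, hj0⟩ := hall
    have hm : 0 < m := j0.pos
    obtain ⟨m', rfl⟩ : ∃ m', m = m' + 1 := ⟨m - 1, by omega⟩
    have hu2 : 2 ≤ 3 * (m' + 1) + 1 := by omega
    set c : ℕ := (3 * (m' + 1) + 1) ^ n with hcdef
    have hRlow : 2 * (m' + 1) * c + c ≤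
        ∑ j : Fin (m' + 1), ∑ l : Fin 3, if kept j l then 0 else c := by
      rw [← Finset.add_sum_erase _ _ (Finset.mem_univ j0), S14.sum3_no hj0]
      have h1 : ((Finset.univ : Finset (Fin (m' + 1))).erase j0).card • (2 * c) ≤
          ∑ j ∈ (Finset.univ : Finset (Fin (m' + 1))).erase j0,
            ∑ l : Fin 3, if kept j l then 0 else c := by
        rw [← Finset.sum_const]
        refine Finset.sum_le_sum fun j _ => ?_
        by_cases hex : ∃ l, kept j l
        · rw [S14.sum3_one hex.choose_spec (huniq j)]
        · push_neg at hex
          rw [S14.sum3_no hex]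
          omega
      rw [Finset.card_erase_of_mem (Finset.mem_univ j0), Finset.card_univ,
        Fintype.card_fin, smul_eq_mul] at h1
      have h2 : 3 * c + (m' + 1 - 1) * (2 * c) = 2 * (m' + 1) * c + c := by
        simp only [Nat.add_sub_cancel]
        ring
      omega
    have hwlt : S14.wgt (3 * (m' + 1) + 1) n νmax < c := S14.wgt_lt hu2 νmax
    rw [hR] at hc'
    omega

/-- The canonical interpretation determined by a choice of literal `σ j` for each
clause and an assignment `ν`. -/
def S14.witI (m n : ℕ) (φ : Fin m → Fin 3 → Bool × Fin n) (σ : Fin m → Fin 3)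
    (ν : Fin n → Bool) : Interp ℕ where
  dom := Set.univ
  indI := id
  cI := fun A => {a : ℕ | A = cT ∧ ∃ i : Fin n, a = (i : ℕ) ∧ ν i = true}
  rI := fun r => {p : ℕ × ℕ | ∃ j : Fin m, p.1 = n + (j : ℕ) ∧
    p.2 = ((φ j (σ j)).2 : ℕ) ∧ r = (if (φ j (σ j)).1 then pR (σ j) else nR (σ j))}
  cI_sub := fun _ => Set.subset_univ _
  rI_sub := fun _ _ _ => ⟨Set.mem_univ _, Set.mem_univ _⟩

lemma S14.witI_rI {m n : ℕ} {φ : Fin m → Fin 3 → Bool × Fin n} {σ : Fin m → Fin 3}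
    {ν : Fin n → Bool} {r : RName} {p : ℕ × ℕ} :
    p ∈ (S14.witI m n φ σ ν).rI r ↔ ∃ j : Fin m, p.1 = n + (j : ℕ) ∧
      p.2 = ((φ j (σ j)).2 : ℕ) ∧
      r = (if (φ j (σ j)).1 then pR (σ j) else nR (σ j)) := Iff.rfl

lemma S14.witI_cT {m n : ℕ} {φ : Fin m → Fin 3 → Bool × Fin n} {σ : Fin m → Fin 3}
    {ν : Fin n → Bool} {a : ℕ} :
    a ∈ (S14.witI m n φ σ ν).cI cT ↔ ∃ i : Fin n, a = (i : ℕ) ∧ ν i = true :=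
  ⟨fun h => h.2, fun h => ⟨rfl, h⟩⟩

/-- Decode a role equality against the canonical interpretation. -/
lemma S14.role_decode {m n : ℕ} {φ : Fin m → Fin 3 → Bool × Fin n} {σ : Fin m → Fin 3}
    {j : Fin m} {b : Bool} {l : Fin 3}
    (h : (if b then pR l else nR l) = (if (φ j (σ j)).1 then pR (σ j) else nR (σ j))) :
    l = σ j ∧ b = (φ j (σ j)).1 := by
  have hl := l.isLt
  have hs := (σ j).isLt
  cases b <;> cases hb : (φ j (σ j)).1 <;> rw [hb] at h <;>
    simp only [Bool.false_eq_true, if_false, if_true, reduceIte, pR, nR] at h <;>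
    first
    | exact ⟨Fin.ext (by have h' : 3 + (l : ℕ) = 3 + ((σ j) : ℕ) := h; omega), rfl⟩
    | exact ⟨Fin.ext h, rfl⟩
    | exact absurd (show 3 + (l : ℕ) = ((σ j) : ℕ) from h) (by omega)
    | exact absurd (show (l : ℕ) = 3 + ((σ j) : ℕ) from h) (by omega)

lemma S14.witI_tbox {m n : ℕ} {φ : Fin m → Fin 3 → Bool × Fin n} {σ : Fin m → Fin 3}
    {ν : Fin n → Bool} (hσ : ∀ j, ν (φ j (σ j)).2 = (φ j (σ j)).1) :
    ∀ τ ∈ lexTbox, Axiom.vioCount (S14.witI m n φ σ ν) τ = 0 := by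
  intro τ hτ
  rw [lexTbox] at hτ
  simp only [Finset.mem_union, Finset.mem_image, Finset.mem_univ, true_and,
    Finset.mem_filter] at hτ
  obtain ((((⟨l, hl⟩ | ⟨⟨a, b⟩, hab⟩) | ⟨⟨a, b⟩, hab⟩) | ⟨⟨a, b⟩, hne, hab⟩) |
      ⟨⟨a, b⟩, hne, hab⟩) := hτ
  · -- ∃n⁻ ⊑ ¬T
    subst hl
    refine S14.vio_zero_iff.mpr fun d hd => ?_
    obtain ⟨e, he⟩ := S14.interp_exRinv.mp hd
    obtain ⟨j, hj1, hj2, hj3⟩ := S14.witI_rI.mp he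
    obtain ⟨-, hsgn⟩ :=
      S14.role_decode (show (if false then pR l else nR l) = _ from hj3)
    refine ⟨Set.mem_univ d, fun hdc => ?_⟩
    obtain ⟨i, hdi, hit⟩ := S14.witI_cT.mp hdc
    have hj2' : d = ((φ j (σ j)).2 : ℕ) := hj2
    have hiv : i = (φ j (σ j)).2 := Fin.ext (by omega)
    rw [hiv] at hit
    rw [hσ j, ← hsgn] at hit
    exact Bool.false_ne_true hit
  · -- ∃p ⊑ ¬∃n
    subst hab
    refine S14.vio_zero_iff.mpr fun d hd => ?_
    obtain ⟨e, he⟩ := S14.interp_exR.mp hd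
    obtain ⟨j, hj1, -, hj3⟩ := S14.witI_rI.mp he
    obtain ⟨-, hsgn⟩ :=
      S14.role_decode (show (if true then pR a else nR a) = _ from hj3)
    refine ⟨Set.mem_univ d, fun hdn => ?_⟩
    obtain ⟨e', he'⟩ := S14.interp_exR.mp hdn
    obtain ⟨j', hj1', -, hj3'⟩ := S14.witI_rI.mp he'
    obtain ⟨-, hsgn'⟩ :=
      S14.role_decode (show (if false then pR b else nR b) = _ from hj3')
    have hjj : j = j' := Fin.ext (by
      have h1 : d = n + (j : ℕ) := hj1
      have h2 : d = n + (j' : ℕ) := hj1'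
      omega)
    rw [← hjj, ← hsgn] at hsgn'
    exact Bool.false_ne_true hsgn'
  · -- ∃p⁻ ⊑ ¬∃n⁻
    subst hab
    refine S14.vio_zero_iff.mpr fun d hd => ?_
    obtain ⟨e, he⟩ := S14.interp_exRinv.mp hd
    obtain ⟨j, -, hj2, hj3⟩ := S14.witI_rI.mp he
    obtain ⟨-, hsgn⟩ :=
      S14.role_decode (show (if true then pR a else nR a) = _ from hj3)
    refine ⟨Set.mem_univ d, fun hdn => ?_⟩
    obtain ⟨e', he'⟩ := S14.interp_exRinv.mp hdn
    obtain ⟨j', -, hj2', hj3'⟩ := S14.witI_rI.mp he'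
    obtain ⟨-, hsgn'⟩ :=
      S14.role_decode (show (if false then pR b else nR b) = _ from hj3')
    have ha1 : d = ((φ j (σ j)).2 : ℕ) := hj2
    have ha2 : d = ((φ j' (σ j')).2 : ℕ) := hj2'
    have hvv : (φ j (σ j)).2 = (φ j' (σ j')).2 := Fin.ext (by omega)
    have h1 := hσ j
    have h2 := hσ j'
    rw [← hsgn] at h1
    rw [← hsgn'] at h2
    rw [hvv] at h1
    rw [h1] at h2
    exact Bool.false_ne_true h2.symm
  · -- ∃p ⊑ ¬∃p' (p ≠ p')
    subst hab
    refine S14.vio_zero_iff.mpr fun d hd => ?_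
    obtain ⟨e, he⟩ := S14.interp_exR.mp hd
    obtain ⟨j, hj1, -, hj3⟩ := S14.witI_rI.mp he
    obtain ⟨ha, -⟩ :=
      S14.role_decode (show (if true then pR a else nR a) = _ from hj3)
    refine ⟨Set.mem_univ d, fun hdn => ?_⟩
    obtain ⟨e', he'⟩ := S14.interp_exR.mp hdn
    obtain ⟨j', hj1', -, hj3'⟩ := S14.witI_rI.mp he'
    obtain ⟨hb, -⟩ :=
      S14.role_decode (show (if true then pR b else nR b) = _ from hj3')
    have hjj : j = j' := Fin.ext (by
      have h1 : d = n + (j : ℕ) := hj1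
      have h2 : d = n + (j' : ℕ) := hj1'
      omega)
    exact hne (by rw [ha, hb, hjj])
  · -- ∃n ⊑ ¬∃n' (n ≠ n')
    subst hab
    refine S14.vio_zero_iff.mpr fun d hd => ?_
    obtain ⟨e, he⟩ := S14.interp_exR.mp hd
    obtain ⟨j, hj1, -, hj3⟩ := S14.witI_rI.mp he
    obtain ⟨ha, -⟩ :=
      S14.role_decode (show (if false then pR a else nR a) = _ from hj3)
    refine ⟨Set.mem_univ d, fun hdn => ?_⟩
    obtain ⟨e', he'⟩ := S14.interp_exR.mp hdn
    obtain ⟨j', hj1', -, hj3'⟩ := S14.witI_rI.mp he'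
    obtain ⟨hb, -⟩ :=
      S14.role_decode (show (if false then pR b else nR b) = _ from hj3')
    have hjj : j = j' := Fin.ext (by
      have h1 : d = n + (j : ℕ) := hj1
      have h2 : d = n + (j' : ℕ) := hj1'
      omega)
    exact hne (by rw [ha, hb, hjj])

open Classical in
lemma S14.exists_opt {m n : ℕ} {φ : Fin m → Fin 3 → Bool × Fin n} {ν : Fin n → Bool}
    (hν : SatCNF m n φ ν) :
    ∃ I : Interp ℕ, I.Proper ∧
      cost lexTbox (lexAbox m n φ) (fun _ => ⊤) (lexWA m n) I =
        ((2 * m * (3 * m + 1) ^ n + S14.wgt (3 * m + 1) n ν : ℕ) : ℕ∞) ∧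
      ∀ i : Fin n, (I.indI (xN i) ∈ I.cI cT ↔ ν i = true) := by
  classical
  choose σ hσ using hν
  have hmem : ∀ i : Fin n,
      ((S14.witI m n φ σ ν).indI (xN i) ∈ (S14.witI m n φ σ ν).cI cT ↔ ν i = true) := by
    intro i
    rw [S14.witI_cT]
    constructor
    · rintro ⟨i', h1, h2⟩
      have h1' : (i : ℕ) = (i' : ℕ) := h1
      rwa [show i = i' from Fin.ext h1']
    · intro h
      exact ⟨i, rfl, h⟩
  refine ⟨S14.witI m n φ σ ν, fun a => Set.mem_univ _, ?_, hmem⟩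
  rw [S14.cost_eq (S14.witI_tbox hσ)]
  refine congrArg _ ?_
  have hkept : ∀ (j : Fin m) (l : Fin 3),
      Assertion.sat (S14.witI m n φ σ ν) (S14.edgeA m n φ (j, l)) ↔ l = σ j := by
    intro j l
    rw [S14.sat_edgeA]
    constructor
    · intro h
      obtain ⟨j', hj1, hj2, hj3⟩ := S14.witI_rI.mp h
      have h1 : n + (j : ℕ) = n + (j' : ℕ) := hj1
      have hjj : j = j' := Fin.ext (by omega)
      subst hjj
      exact (S14.role_decode hj3).1
    · rintro rfl
      exact S14.witI_rI.mpr ⟨j, rfl, rfl, rfl⟩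
  have hRsum : (∑ p : Fin m × Fin 3,
      if Assertion.sat (S14.witI m n φ σ ν) (S14.edgeA m n φ p) then 0
        else (3 * m + 1) ^ n) = 2 * m * (3 * m + 1) ^ n := by
    rw [Fintype.sum_prod_type]
    rw [Finset.sum_congr rfl (fun j _ => S14.sum3_one
      (P := fun l => Assertion.sat (S14.witI m n φ σ ν) (S14.edgeA m n φ (j, l)))
      ((hkept j (σ j)).mpr rfl)
      (fun l l' h h' => ((hkept j l).mp h).trans ((hkept j l').mp h').symm)),
      Finset.sum_const, Finset.card_univ, Fintype.card_fin, smul_eq_mul]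
    ring
  have htsum : (∑ i : Fin n,
      if (S14.witI m n φ σ ν).indI (xN i) ∈ (S14.witI m n φ σ ν).cI cT then 0
        else (3 * m + 1) ^ (n - 1 - (i : ℕ))) = S14.wgt (3 * m + 1) n ν := by
    rw [S14.wgt]
    refine Finset.sum_congr rfl fun i _ => ?_
    rw [S14.trm]
    exact if_congr (hmem i) rfl rfl
  rw [hRsum, htsum]

open Classical in
lemma S14.opt_eq {m n : ℕ} {φ : Fin m → Fin 3 → Bool × Fin n} {νmax : Fin n → Bool}
    (hmax : IsLexMax m n φ νmax) :
    optCost lexTbox (lexAbox m n φ) (fun _ => ⊤) (lexWA m n) =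
      ((2 * m * (3 * m + 1) ^ n + S14.wgt (3 * m + 1) n νmax : ℕ) : ℕ∞) := by
  obtain ⟨I, hP, hcost, -⟩ := S14.exists_opt hmax.1
  apply le_antisymm
  · exact sInf_le ⟨ℕ, I, hP, hcost⟩
  · refine le_sInf ?_
    rintro c ⟨V, J, hJ, rfl⟩
    by_cases h : cost lexTbox (lexAbox m n φ) (fun _ => ⊤) (lexWA m n) J ≤
        ((2 * m * (3 * m + 1) ^ n + S14.wgt (3 * m + 1) n νmax : ℕ) : ℕ∞)
    · exact (S14.main_lb hmax J h).1.ge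
    · exact le_of_not_ge h
end S14

/-- For a satisfiable 3-CNF `φ` with lexicographically maximum
satisfying assignment `ν_max` and a variable `x_k`:
`K_ω ⊨꜀ᵒᵖᵗ T(x_k)` iff `K_ω ⊨ₚᵒᵖᵗ T(x_k)` iff `ν_max(x_k) = 1`. -/
theorem statement14 (m n : ℕ) (φ : Fin m → Fin 3 → Bool × Fin n)
    (νmax : Fin n → Bool) (hmax : IsLexMax m n φ νmax) (idx : Fin n) :
    (satCopt lexTbox (lexAbox m n φ) (fun _ => ⊤) (lexWA m n)
        {QAtom.ca cT (Term.ind (xN idx))} ↔ νmax idx = true) ∧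
    (satPopt lexTbox (lexAbox m n φ) (fun _ => ⊤) (lexWA m n)
        {QAtom.ca cT (Term.ind (xN idx))} ↔ νmax idx = true) := by
  classical
  obtain ⟨I0, hP0, hc0, hm0⟩ := S14.exists_opt hmax.1
  have hopt := S14.opt_eq hmax
  have hsatQ_iff : ∀ (U : Type) (I : Interp U), I.Proper →
      (satQ I {QAtom.ca cT (Term.ind (xN idx))} ↔ I.indI (xN idx) ∈ I.cI cT) := by
    intro U I hP
    constructor
    · rintro ⟨π, hπ, hsat⟩
      exact hsat _ (Finset.mem_singleton_self _)
    · intro h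
      refine ⟨fun _ => I.indI 0, fun v => hP 0, fun a ha => ?_⟩
      rw [Finset.mem_singleton] at ha
      subst ha
      exact h
  have key : ∀ (U : Type) (I : Interp U),
      cost lexTbox (lexAbox m n φ) (fun _ => ⊤) (lexWA m n) I =
        optCost lexTbox (lexAbox m n φ) (fun _ => ⊤) (lexWA m n) →
      (I.indI (xN idx) ∈ I.cI cT ↔ νmax idx = true) := by
    intro U I hc
    rw [hopt] at hc
    exact (S14.main_lb hmax I hc.le).2 idx
  constructor
  · constructor
    · intro hC
      have hq := hC ℕ I0 hP0 (by rw [hopt]; exact hc0)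
      rw [hsatQ_iff ℕ I0 hP0] at hq
      exact (hm0 idx).mp hq
    · intro hν U I hP hc
      rw [hsatQ_iff U I hP]
      exact (key U I hc).mpr hν
  · constructor
    · rintro ⟨U, I, hP, hc, hq⟩
      rw [hsatQ_iff U I hP] at hq
      exact (key U I hc).mp hq
    · intro hν
      exact ⟨ℕ, I0, hP0, by rw [hopt]; exact hc0,
        (hsatQ_iff ℕ I0 hP0).mpr ((hm0 idx).mpr hν)⟩

end DL
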